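/- Let Υ: U → Z be a random function between finite nonempty sets, given by probabilities P[υ_u = z], and let M be the (|Z|+1) × |U| real matrix whose rows are the vectors (P[υ_u = z])_{u∈U} for each z ∈ Z together with one additional all-ones row. If rank(M) < |U|, then there exists a finite set A (one may take |A| = 2) and an invertible random function Ξ: A → U such that the composition Υ∘Ξ: A → Z (given by P[(Υ∘Ξ)_a = z] = Σ_{u∈U} P[ξ_a = u]·P[υ_u = z]) is not invertible. -/

import Mathlib

open Finset

/-- A random function `A → V`, given by the distributions `p a` on `V`, is invertible if
there is an independent random function `Γ : V → A` (distributions `g v` on `A`) with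
`P[γ_{φ_a} = a] > P[γ_{φ_a} = x]` for every `a ∈ A` and every `x ≠ a`. -/
def IsInvertible {A V : Type*} [Fintype A] [Fintype V] (p : A → V → ℝ) : Prop :=
  ∃ g : V → A → ℝ, (∀ v x, 0 ≤ g v x) ∧ (∀ v, ∑ x, g v x = 1) ∧
    ∀ a x, x ≠ a → ∑ v, p a v * g v x < ∑ v, p a v * g v a

lemma invertible_of_ne {V : Type*} [Fintype V] (p : Fin 2 → V → ℝ)
    (h1 : ∀ a, ∑ v, p a v = 1) (hne : p 0 ≠ p 1) : IsInvertible p := by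
  classical
  unfold IsInvertible
  set d : V → ℝ := fun v => p 0 v - p 1 v with hd
  set c : ℝ := (∑ v, d v * (p 0 v + p 1 v)) / 2 with hc
  set e : V → ℝ := fun v => d v - c with he
  have hS : ∑ v, d v ^ 2 > 0 := by
    apply Finset.sum_pos'
    · intro v _; positivity
    · obtain ⟨v, hv⟩ : ∃ v, d v ≠ 0 := by
        by_contra h
        push_neg at h
        exact hne (funext fun v => by have := h v; simp [hd] at this; linarith)
      exact ⟨v, Finset.mem_univ v, by positivity⟩
  have hA : ∀ a, ∑ v, p a v * e v = ∑ v, p a v * d v - c := by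
    intro a
    simp [he, mul_sub, Finset.sum_sub_distrib, ← Finset.sum_mul, h1]
  have hc2 : 2 * c = (∑ v, p 0 v * d v) + ∑ v, p 1 v * d v := by
    rw [hc]
    rw [show (∑ v, d v * (p 0 v + p 1 v)) = (∑ v, p 0 v * d v) + ∑ v, p 1 v * d v by
      rw [← Finset.sum_add_distrib]; exact Finset.sum_congr rfl fun v _ => by ring]
    ring
  have hd2 : ∑ v, d v ^ 2 = (∑ v, p 0 v * d v) - ∑ v, p 1 v * d v := by
    rw [← Finset.sum_sub_distrib]; exact Finset.sum_congr rfl fun v _ => by simp [hd]; ring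
  have hp0e : ∑ v, p 0 v * e v = (∑ v, d v ^ 2) / 2 := by rw [hA]; linarith
  have hp1e : ∑ v, p 1 v * e v = -((∑ v, d v ^ 2) / 2) := by rw [hA]; linarith
  clear_value d c e
  have hEnn : 0 ≤ ∑ v, |e v| := Finset.sum_nonneg fun v _ => abs_nonneg _
  obtain ⟨δ, hδpos, hδe⟩ : ∃ δ : ℝ, 0 < δ ∧ ∀ v, δ * |e v| ≤ 1 / 2 := by
    refine ⟨(2 * ((∑ v, |e v|) + 1))⁻¹, by positivity, fun v => ?_⟩
    have h1' : |e v| ≤ (∑ v, |e v|) + 1 := by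
      have := Finset.single_le_sum (f := fun v => |e v|) (fun v _ => abs_nonneg _)
        (Finset.mem_univ v)
      linarith
    rw [inv_mul_le_iff₀ (by positivity)]
    nlinarith
  refine ⟨fun v x => if x = 0 then 1/2 + δ * e v else 1/2 - δ * e v, ?_, ?_, ?_⟩
  · intro v x
    have h2 := hδe v
    have h3 : -(1/2) ≤ δ * e v ∧ δ * e v ≤ 1/2 := by
      have hb := neg_abs_le (e v); have hcb := le_abs_self (e v)
      have h4 : -(δ * |e v|) ≤ δ * e v := by
        rw [← mul_neg]; exact mul_le_mul_of_nonneg_left hb hδpos.le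
      have h5 : δ * e v ≤ δ * |e v| := mul_le_mul_of_nonneg_left hcb hδpos.le
      exact ⟨by linarith, by linarith⟩
    by_cases hx : x = 0 <;> simp [hx] <;> linarith [h3.1, h3.2]
  · intro v; rw [Fin.sum_univ_two]; norm_num
  · intro a x hxa
    have keyg : ∀ (b : Fin 2) (f : V → ℝ),
        (∑ v, p b v * (1/2 + f v)) = 1/2 + ∑ v, p b v * f v := by
      intro b f
      have h2 : ∑ v, p b v * (1/2 + f v) = (∑ v, p b v) * (1/2) + ∑ v, p b v * f v := by
        rw [Finset.sum_mul, ← Finset.sum_add_distrib]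
        exact Finset.sum_congr rfl fun v _ => by ring
      rw [h2, h1]; ring
    have E0 : ∀ b : Fin 2, ∑ v, p b v * (1/2 + δ * e v) = 1/2 + δ * ∑ v, p b v * e v := by
      intro b
      rw [keyg b (fun v => δ * e v), Finset.mul_sum]
      congr 1
      exact Finset.sum_congr rfl fun v _ => by ring
    have E1 : ∀ b : Fin 2, ∑ v, p b v * (1/2 - δ * e v) = 1/2 - δ * ∑ v, p b v * e v := by
      intro b
      have h2 : ∑ v, p b v * (1/2 - δ * e v) = ∑ v, p b v * (1/2 + (fun v => -(δ * e v)) v) :=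
        Finset.sum_congr rfl fun v _ => by ring
      rw [h2, keyg b (fun v => -(δ * e v))]
      rw [show (∑ v, p b v * -(δ * e v)) = -(δ * ∑ v, p b v * e v) by
        rw [Finset.mul_sum, ← Finset.sum_neg_distrib]
        exact Finset.sum_congr rfl fun v _ => by ring]
      ring
    have hne01 : ((1:Fin 2) = 0) = False := by simp
    fin_cases a <;> fin_cases x <;>
      simp only [Fin.mk_zero, Fin.mk_one, Fin.isValue, hne01, if_false, if_true, if_pos rfl,
        ne_eq] at hxa ⊢
    · exact absurd trivial hxa
    · rw [E0 0, E1 0, hp0e]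
      have := mul_pos hδpos (by linarith : (0:ℝ) < (∑ v, d v ^ 2) / 2)
      linarith
    · rw [E0 1, E1 1, hp1e]
      have := mul_pos hδpos (by linarith : (0:ℝ) < (∑ v, d v ^ 2) / 2)
      nlinarith
    · exact absurd trivial hxa


/-- Let `Υ : U → Z` be a random function given by `q u z = P[υ_u = z]`,
and let `M` be the `(|Z|+1) × |U|` matrix whose rows are `(q u z)_u` for `z ∈ Z`
together with an all-ones row.  If `rank M < |U|`, then there is an invertible random
function `Ξ` from a two-element set `A` to `U` whose composition with `Υ` is not
invertible. -/
theorem stmt4 {U Z : Type*} [Fintype U] [Fintype Z] [Nonempty U] [Nonempty Z]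
    [DecidableEq U]
    (q : U → Z → ℝ) (hq0 : ∀ u z, 0 ≤ q u z) (hq1 : ∀ u, ∑ z, q u z = 1)
    (hrank : (Matrix.of fun (r : Option Z) (u : U) =>
        Option.elim r 1 (fun z => q u z)).rank < Fintype.card U) :
    ∃ p : Fin 2 → U → ℝ, (∀ a u, 0 ≤ p a u) ∧ (∀ a, ∑ u, p a u = 1) ∧
      IsInvertible p ∧ ¬ IsInvertible (fun a z => ∑ u, p a u * q u z) := by
  classical
  -- Step 1: extract a nonzero kernel vector `c`.
  obtain ⟨c, hcne, hcsum, hcq⟩ :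
      ∃ c : U → ℝ, c ≠ 0 ∧ (∑ u, c u = 0) ∧ ∀ z, ∑ u, c u * q u z = 0 := by
    set M := (Matrix.of fun (r : Option Z) (u : U) =>
        Option.elim r 1 (fun z => q u z)) with hM
    have hker : 0 < Module.finrank ℝ (LinearMap.ker M.mulVecLin) := by
      have h2 := LinearMap.finrank_range_add_finrank_ker M.mulVecLin
      have h3 : Module.finrank ℝ (U → ℝ) = Fintype.card U := Module.finrank_pi ℝ
      have h4 : M.rank = Module.finrank ℝ (LinearMap.range M.mulVecLin) := rfl
      omega
    obtain ⟨⟨c, hcker⟩, hc0⟩ := Module.finrank_pos_iff_exists_ne_zero.mp hker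
    have hcne : c ≠ 0 := fun h => hc0 (by ext; simp [h])
    have hmv : M.mulVec c = 0 := hcker
    refine ⟨c, hcne, ?_, ?_⟩
    · have := congrFun hmv (none : Option Z)
      simpa [Matrix.mulVec, dotProduct, hM] using this
    · intro z
      have := congrFun hmv (some z)
      simp [Matrix.mulVec, dotProduct, hM] at this
      rw [← this]
      exact Finset.sum_congr rfl fun u _ => mul_comm _ _
  -- Step 2: set up the small perturbation.
  set n : ℝ := (Fintype.card U : ℝ) with hn
  have hnpos : 0 < n := by
    rw [hn]; exact_mod_cast Fintype.card_pos
  have habs : 0 ≤ ∑ u, |c u| := Finset.sum_nonneg fun u _ => abs_nonneg _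
  obtain ⟨ε, hεpos, hεb⟩ : ∃ ε : ℝ, 0 < ε ∧ ∀ u, ε * |c u| ≤ (2 * n)⁻¹ := by
    refine ⟨(2 * n * ((∑ u, |c u|) + 1))⁻¹, by positivity, fun u => ?_⟩
    have h1' : |c u| ≤ (∑ u, |c u|) + 1 := by
      have := Finset.single_le_sum (f := fun u => |c u|) (fun u _ => abs_nonneg _)
        (Finset.mem_univ u)
      linarith
    rw [inv_mul_le_iff₀ (by positivity)]
    calc |c u| ≤ (∑ u, |c u|) + 1 := h1'
      _ = ((∑ u, |c u|) + 1) * ((2 * n) * (2 * n)⁻¹) := by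
          rw [mul_inv_cancel₀ (by positivity)]; ring
      _ = 2 * n * ((∑ u, |c u|) + 1) * (2 * n)⁻¹ := by ring
  clear_value n
  obtain ⟨p, hp0, hp1⟩ : ∃ p : Fin 2 → U → ℝ,
      (∀ u, p 0 u = n⁻¹ + ε * c u) ∧ (∀ u, p 1 u = n⁻¹ - ε * c u) :=
    ⟨fun a u => if a = 0 then n⁻¹ + ε * c u else n⁻¹ - ε * c u,
      fun u => by simp, fun u => by norm_num⟩
  have hbound : ∀ u, |ε * c u| ≤ (2 * n)⁻¹ := by
    intro u; rw [abs_mul, abs_of_pos hεpos]; exact hεb u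
  have hhalf : (2 * n)⁻¹ ≤ n⁻¹ := by
    rw [inv_le_inv₀ (by positivity) hnpos]; linarith
  have hpnn : ∀ a u, 0 ≤ p a u := by
    intro a u
    have h2 := hbound u
    have h3 := neg_abs_le (ε * c u)
    have h4 := le_abs_self (ε * c u)
    have ha : a = 0 ∨ a = 1 := by omega
    rcases ha with rfl | rfl
    · rw [hp0]; linarith
    · rw [hp1]; linarith
  have hsum : ∀ a, ∑ u, p a u = 1 := by
    have hninv : ∑ _u : U, n⁻¹ = 1 := by
      rw [Finset.sum_const, nsmul_eq_mul, Finset.card_univ, ← hn,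
        mul_inv_cancel₀ (ne_of_gt hnpos)]
    have hcε : ∑ u, ε * c u = 0 := by
      rw [← Finset.mul_sum, hcsum, mul_zero]
    intro a
    have ha : a = 0 ∨ a = 1 := by omega
    rcases ha with rfl | rfl
    · rw [show (∑ u, p 0 u) = (∑ _u : U, n⁻¹) + ∑ u, ε * c u by
        rw [← Finset.sum_add_distrib]; exact Finset.sum_congr rfl fun u _ => hp0 u]
      rw [hninv, hcε]; ring
    · rw [show (∑ u, p 1 u) = (∑ _u : U, n⁻¹) - ∑ u, ε * c u by
        rw [← Finset.sum_sub_distrib]; exact Finset.sum_congr rfl fun u _ => hp1 u]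
      rw [hninv, hcε]; ring
  refine ⟨p, hpnn, hsum, ?_, ?_⟩
  · -- Ξ is invertible since its two distributions differ.
    apply invertible_of_ne p hsum
    obtain ⟨u, hu⟩ : ∃ u, c u ≠ 0 := by
      by_contra h; push_neg at h
      exact hcne (funext fun u => h u)
    intro h
    have := congrFun h u
    rw [hp0, hp1] at this
    have : ε * c u = 0 := by linarith
    rcases mul_eq_zero.mp this with h' | h'
    · exact absurd h' (ne_of_gt hεpos)
    · exact hu h'
  · -- The composition has equal rows, hence is not invertible.
    have hrow : ∀ z, ∑ u, p 0 u * q u z = ∑ u, p 1 u * q u z := by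
      intro z
      have hdiff : (∑ u, p 0 u * q u z) - ∑ u, p 1 u * q u z
          = 2 * ε * ∑ u, c u * q u z := by
        rw [← Finset.sum_sub_distrib, Finset.mul_sum]
        refine Finset.sum_congr rfl fun u _ => ?_
        rw [hp0, hp1]; ring
      rw [hcq z, mul_zero] at hdiff
      linarith
    rw [IsInvertible]
    rintro ⟨g, hg0, hg1, hlt⟩
    have h01 := hlt 0 1 (by norm_num)
    have h10 := hlt 1 0 (by norm_num)
    have e0 : ∀ x, (∑ z, (∑ u, p 0 u * q u z) * g z x)
        = ∑ z, (∑ u, p 1 u * q u z) * g z x := fun x =>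
      Finset.sum_congr rfl fun z _ => by rw [hrow z]
    rw [e0 0, e0 1] at h01
    linarith
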